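/- Let X be a topological space, E a real topological vector space, and Λ a convex subset of a real vector space of functions from X × E to ℝ, equipped with a vector topology. Let Q : Λ → 2^{X×E} be a lower semicontinuous multifunction such that Q(f) is non-empty and connected for every f ∈ Λ. Then the graph {(f,x,y) : (x,y) ∈ Q(f)} is connected. -/

import Mathlib

theorem graph_connected_of_lsc_multifunction_on_convex
    {X : Type*} [TopologicalSpace X]
    {E : Type*} [AddCommGroup E] [Module ℝ E] [TopologicalSpace E]
    [IsTopologicalAddGroup E] [ContinuousSMul ℝ E]
    {F : Type*} [AddCommGroup F] [Module ℝ F] [TopologicalSpace F]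
    [IsTopologicalAddGroup F] [ContinuousSMul ℝ F]
    (toFun : F →ₗ[ℝ] (X × E → ℝ))
    (Λ : Set F) (hΛconv : Convex ℝ Λ) (hΛne : Λ.Nonempty)
    (Q : Λ → Set (X × E))
    (hlsc : ∀ V : Set (X × E), IsOpen V → IsOpen {l : Λ | (Q l ∩ V).Nonempty})
    (hne : ∀ l : Λ, (Q l).Nonempty)
    (hconn : ∀ l : Λ, IsConnected (Q l)) :
    IsConnected {p : Λ × (X × E) | p.2 ∈ Q p.1} := by
  classical
  have hΛconn : IsConnected Λ := ⟨hΛne, hΛconv.isPreconnected⟩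
  haveI : ConnectedSpace Λ := Subtype.connectedSpace hΛconn
  set S : Set (↥Λ × (X × E)) := {p | p.2 ∈ Q p.1} with hSdef
  have hfib : ∀ l : Λ, IsConnected ((fun p => ((l : Λ), p)) '' Q l) :=
    fun l => (hconn l).image _ (Continuous.continuousOn (by continuity))
  have hfibS : ∀ l : Λ, (fun p => ((l : Λ), p)) '' Q l ⊆ S := by
    rintro l _ ⟨p, hp, rfl⟩; exact hp
  constructor
  · obtain ⟨f, hf⟩ := hΛne
    obtain ⟨p, hp⟩ := hne ⟨f, hf⟩
    exact ⟨(⟨f, hf⟩, p), hp⟩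
  · intro u v hu hv hcov hsu hsv
    obtain ⟨a, haS, hau⟩ := hsu
    obtain ⟨b, hbS, hbv⟩ := hsv
    set A := {l : Λ | ∃ p ∈ Q l, ((l, p) : Λ × (X × E)) ∈ u} with hAdef
    set B := {l : Λ | ∃ p ∈ Q l, ((l, p) : Λ × (X × E)) ∈ v} with hBdef
    have hopen : ∀ (w : Set (Λ × (X × E))), IsOpen w →
        IsOpen {l : Λ | ∃ p ∈ Q l, ((l, p) : Λ × (X × E)) ∈ w} := by
      intro w hw
      rw [isOpen_iff_mem_nhds]
      rintro l ⟨p, hp, hpw⟩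
      obtain ⟨W, V, hW, hV, hlW, hpV, hWV⟩ := isOpen_prod_iff.mp hw l p hpw
      refine mem_nhds_iff.mpr ⟨W ∩ {l' : Λ | (Q l' ∩ V).Nonempty}, ?_,
        (hW.inter (hlsc V hV)), ⟨hlW, p, hp, hpV⟩⟩
      rintro l' ⟨hl'W, q, hq, hqV⟩
      exact ⟨q, hq, hWV ⟨hl'W, hqV⟩⟩
    have hAopen : IsOpen A := hopen u hu
    have hBopen : IsOpen B := hopen v hv
    have hcovAB : Set.univ ⊆ A ∪ B := by
      intro l _
      obtain ⟨p, hp⟩ := hne l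
      rcases hcov (show ((l, p) : Λ × (X × E)) ∈ S from hp) with h | h
      · exact Or.inl ⟨p, hp, h⟩
      · exact Or.inr ⟨p, hp, h⟩
    have hAne : (Set.univ ∩ A).Nonempty := ⟨a.1, trivial, a.2, haS, hau⟩
    have hBne : (Set.univ ∩ B).Nonempty := ⟨b.1, trivial, b.2, hbS, hbv⟩
    obtain ⟨l, _, hlA, hlB⟩ := isPreconnected_univ A B hAopen hBopen hcovAB hAne hBne
    obtain ⟨p, hp, hpu⟩ := hlA
    obtain ⟨q, hq, hqv⟩ := hlB
    obtain ⟨x, hxfib, hxuv⟩ := (hfib l).isPreconnected u v hu hv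
      (fun y hy => hcov (hfibS l hy)) ⟨(l, p), ⟨p, hp, rfl⟩, hpu⟩
      ⟨(l, q), ⟨q, hq, rfl⟩, hqv⟩
    exact ⟨x, hfibS l hxfib, hxuv⟩
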